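/- Straight-line solutions for concave homogeneous potentials: let φ : ℝ^m → ℝ be concave (−φ is convex) and positively homogeneous of degree 1 (φ(λX) = λφ(X) for all λ ≥ 0 and X ∈ ℝ^m), let h : ℝ^m → ℝ be differentiable, and let P₀ ∈ D_0(φ) satisfy h(P₀) ≤ h(P) for all P ∈ D_0(φ). Set X(t) = t·∇h(P₀) for t ≥ 0. Then for every t ≥ 0: D_{X(t)}(φ) ⊆ D_0(φ), P₀ ∈ D_{X(t)}(φ), and h(P₀) ≤ h(P) for all P ∈ D_{X(t)}(φ); in particular P₀ is a minimizer of h over D_{X(t)}(φ), so the trajectory X solves the gradient differential equation X⁺(t) = ∇h(P₀). -/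

import Mathlib

open Filter Topology RealInnerProductSpace

noncomputable section

/-- The quadratic form `Z ↦ ⟪E Z, Z⟫ / 2` associated with a linear operator `E` on `ℝ^m`. -/
def quadForm {m : ℕ} (Eop : EuclideanSpace ℝ (Fin m) →L[ℝ] EuclideanSpace ℝ (Fin m))
    (Z : EuclideanSpace ℝ (Fin m)) : ℝ :=
  ⟪Eop Z, Z⟫ / 2

/-- The super-differential of `φ` at `X` relative to the quadratic form `e`:
`D_X(φ) = { P : φ(Y) ≤ φ(X) + ⟪P, Y − X⟫ + e(Y − X) for all Y }`. -/
def superDiff {m : ℕ} (e φ : EuclideanSpace ℝ (Fin m) → ℝ)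
    (X : EuclideanSpace ℝ (Fin m)) : Set (EuclideanSpace ℝ (Fin m)) :=
  {P | ∀ Y, φ Y ≤ φ X + ⟪P, Y - X⟫ + e (Y - X)}

/-- The Hamiltonian `h(P) = ⟪q₀, P⟫ + ⟪A P, P⟫ / 2`, the sum of a linear form and a
quadratic form. -/
def quadHam {m : ℕ} (q₀ : EuclideanSpace ℝ (Fin m))
    (A : EuclideanSpace ℝ (Fin m) →L[ℝ] EuclideanSpace ℝ (Fin m))
    (P : EuclideanSpace ℝ (Fin m)) : ℝ :=
  ⟪q₀, P⟫ + ⟪A P, P⟫ / 2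

/-- `X : [0,∞) → ℝ^m` solves the gradient differential equation `X⁺(t) = ∇h(φ)(X(t))` for the
Hamiltonian `h = quadHam q₀ A`: at every `t ≥ 0` the Hamiltonian attains its minimum over the
super-differential `D_{X(t)}(φ)`, and for every minimizer `P` the one-way derivative `X⁺(t)`
exists and equals `h'(P) = q₀ + A P`. -/
def SolvesGradODE {m : ℕ} (e φ : EuclideanSpace ℝ (Fin m) → ℝ)
    (q₀ : EuclideanSpace ℝ (Fin m))
    (A : EuclideanSpace ℝ (Fin m) →L[ℝ] EuclideanSpace ℝ (Fin m))
    (X : ℝ → EuclideanSpace ℝ (Fin m)) : Prop :=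
  ∀ t, 0 ≤ t →
    (∃ P ∈ superDiff e φ (X t), ∀ P' ∈ superDiff e φ (X t),
        quadHam q₀ A P ≤ quadHam q₀ A P') ∧
    ∀ P ∈ superDiff e φ (X t), (∀ P' ∈ superDiff e φ (X t),
        quadHam q₀ A P ≤ quadHam q₀ A P') →
      Tendsto (fun lam : ℝ => lam⁻¹ • (X (t + lam) - X t)) (𝓝[>] 0) (𝓝 (q₀ + A P))

section Aux
variable {m : ℕ} {φ : EuclideanSpace ℝ (Fin m) → ℝ}

lemma phi_zero (hhom : ∀ c : ℝ, 0 ≤ c → ∀ X, φ (c • X) = c * φ X) : φ 0 = 0 := by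
  have := hhom 0 le_rfl 0
  simpa using this

lemma superDiff_global (hhom : ∀ c : ℝ, 0 ≤ c → ∀ X, φ (c • X) = c * φ X)
    {X P : EuclideanSpace ℝ (Fin m)} (hP : P ∈ superDiff (fun _ => 0) φ X) :
    (∀ Y, φ Y ≤ ⟪P, Y⟫) ∧ φ X = ⟪P, X⟫ := by
  have h2 := hP ((2 : ℝ) • X)
  have h0 := hP 0
  simp only [add_zero] at h2 h0
  rw [hhom 2 (by norm_num) X] at h2
  have h2' : φ X ≤ ⟪P, X⟫ := by
    have hx : (2:ℝ) • X - X = X := by module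
    rw [hx] at h2; linarith
  have h0' : ⟪P, X⟫ ≤ φ X := by
    rw [phi_zero hhom] at h0
    have hx : ⟪P, (0 : EuclideanSpace ℝ (Fin m)) - X⟫ = -⟪P, X⟫ := by
      rw [zero_sub, inner_neg_right]
    rw [hx] at h0; linarith
  have heq : φ X = ⟪P, X⟫ := le_antisymm h2' h0'
  refine ⟨fun Y => ?_, heq⟩
  have hY := hP Y
  simp only [add_zero] at hY
  rw [inner_sub_right] at hY
  linarith

lemma superDiff_zero_iff (hhom : ∀ c : ℝ, 0 ≤ c → ∀ X, φ (c • X) = c * φ X)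
    {P : EuclideanSpace ℝ (Fin m)} :
    P ∈ superDiff (fun _ => 0) φ 0 ↔ ∀ Y, φ Y ≤ ⟪P, Y⟫ := by
  constructor
  · exact fun hP => (superDiff_global hhom hP).1
  · intro hP Y
    have := hP Y
    rw [phi_zero hhom]
    simp only [add_zero, sub_zero, zero_add]
    exact this

lemma superDiff_zero_convex (hhom : ∀ c : ℝ, 0 ≤ c → ∀ X, φ (c • X) = c * φ X) :
    Convex ℝ (superDiff (fun _ => 0) φ 0) := by
  intro x hx y hy a b ha hb hab
  rw [superDiff_zero_iff hhom] at hx hy ⊢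
  intro Y
  have h1 : a * φ Y ≤ a * ⟪x, Y⟫ := mul_le_mul_of_nonneg_left (hx Y) ha
  have h2 : b * φ Y ≤ b * ⟪y, Y⟫ := mul_le_mul_of_nonneg_left (hy Y) hb
  have h3 : a * φ Y + b * φ Y = φ Y := by linear_combination φ Y * hab
  have h4 : ⟪a • x + b • y, Y⟫ = a * ⟪x, Y⟫ + b * ⟪y, Y⟫ := by
    rw [inner_add_left, real_inner_smul_left, real_inner_smul_left]
  rw [h4]
  linarith

/-- Existence of a supergradient at any point, via Hahn–Banach separation. -/
lemma exists_superDiff (hconc : ConvexOn ℝ Set.univ (fun X => -φ X))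
    (q : EuclideanSpace ℝ (Fin m)) :
    ∃ P, P ∈ superDiff (fun _ => 0) φ q := by
  classical
  have hcontneg : Continuous (fun X : EuclideanSpace ℝ (Fin m) => -φ X) :=
    continuousOn_univ.mp (hconc.continuousOn isOpen_univ)
  have hcont : Continuous φ := by
    exact hcontneg.neg.congr (fun x => neg_neg (φ x))
  set S : Set (EuclideanSpace ℝ (Fin m) × ℝ) := {p | p.2 < φ p.1} with hS
  have hSopen : IsOpen S := isOpen_lt continuous_snd (hcont.comp continuous_fst)
  have hSconv : Convex ℝ S := by
    intro p hp r hr a b ha hb hab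
    simp only [hS, Set.mem_setOf_eq] at hp hr ⊢
    have hφ : a * φ p.1 + b * φ r.1 ≤ φ (a • p.1 + b • r.1) := by
      have := hconc.2 (Set.mem_univ p.1) (Set.mem_univ r.1) ha hb hab
      simp only [smul_eq_mul] at this
      linarith
    have hlt : a * p.2 + b * r.2 < a * φ p.1 + b * φ r.1 := by
      rcases eq_or_lt_of_le ha with h | h
      · have hb1 : b = 1 := by linarith
        simp [← h, hb1, hr]
      · nlinarith [mul_le_mul_of_nonneg_left hr.le hb]
    calc (a • p + b • r).2 = a * p.2 + b * r.2 := rfl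
      _ < a * φ p.1 + b * φ r.1 := hlt
      _ ≤ φ (a • p.1 + b • r.1) := hφ
  have hqS : ((q, φ q) : EuclideanSpace ℝ (Fin m) × ℝ) ∉ S := by simp [hS]
  obtain ⟨f, hf⟩ := geometric_hahn_banach_open_point hSconv hSopen hqS
  set L : EuclideanSpace ℝ (Fin m) →L[ℝ] ℝ :=
    f.comp (ContinuousLinearMap.inl ℝ (EuclideanSpace ℝ (Fin m)) ℝ) with hL
  set a : ℝ := f (0, 1) with ha
  have hfsplit : ∀ x : EuclideanSpace ℝ (Fin m), ∀ y : ℝ, f (x, y) = L x + y * a := by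
    intro x y
    have hxy : (x, y) = ((x, 0) : EuclideanSpace ℝ (Fin m) × ℝ)
        + y • ((0, 1) : EuclideanSpace ℝ (Fin m) × ℝ) := by
      simp [Prod.ext_iff]
    rw [hxy, map_add, map_smul]
    simp [hL, ha, ContinuousLinearMap.inl_apply, smul_eq_mul]
  have hkey : ∀ x : EuclideanSpace ℝ (Fin m), ∀ y : ℝ, y < φ x →
      L x + y * a < L q + φ q * a := by
    intro x y hy
    have := hf (x, y) hy
    rwa [hfsplit, hfsplit] at this
  have hapos : 0 < a := by
    have := hkey q (φ q - 1) (by linarith)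
    nlinarith
  have hclosed : ∀ x : EuclideanSpace ℝ (Fin m), L x + φ x * a ≤ L q + φ q * a := by
    intro x
    by_contra hcon
    push_neg at hcon
    have hdiv : (L q + φ q * a - L x) / a < φ x := by
      rw [div_lt_iff₀ hapos]; linarith
    obtain ⟨y, hy1, hy2⟩ := exists_between hdiv
    have h1 := hkey x y hy2
    have h2 : L q + φ q * a - L x < y * a := (div_lt_iff₀ hapos).mp hy1
    linarith
  set P : EuclideanSpace ℝ (Fin m) :=
    (InnerProductSpace.toDual ℝ (EuclideanSpace ℝ (Fin m))).symm ((-a⁻¹) • L) with hP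
  have hPY : ∀ Z : EuclideanSpace ℝ (Fin m), ⟪P, Z⟫ = -a⁻¹ * L Z := by
    intro Z
    rw [hP, InnerProductSpace.toDual_symm_apply]
    simp
  refine ⟨P, fun Y => ?_⟩
  have h2 : φ Y - φ q ≤ (L q - L Y) / a := by
    rw [le_div_iff₀ hapos]
    nlinarith [hclosed Y]
  have hrw : ⟪P, Y - q⟫ = (L q - L Y) / a := by
    rw [inner_sub_right, hPY, hPY]
    field_simp
    ring
  simp only [add_zero, hrw]
  linarith


lemma optimality (hhom : ∀ c : ℝ, 0 ≤ c → ∀ X, φ (c • X) = c * φ X)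
    {h : EuclideanSpace ℝ (Fin m) → ℝ} (hh_diff : Differentiable ℝ h)
    {P₀ P : EuclideanSpace ℝ (Fin m)}
    (hP₀ : P₀ ∈ superDiff (fun _ => 0) φ 0)
    (hmin : ∀ Q ∈ superDiff (fun _ => 0) φ 0, h P₀ ≤ h Q)
    (hP : P ∈ superDiff (fun _ => 0) φ 0) :
    0 ≤ ⟪gradient h P₀, P - P₀⟫ := by
  set v := P - P₀ with hv
  have hcurve : HasDerivAt (fun s : ℝ => P₀ + s • v) v 0 := by
    simpa using ((hasDerivAt_id (0:ℝ)).smul_const v).const_add P₀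
  have e0 : (fun s : ℝ => P₀ + s • v) 0 = P₀ := by simp
  have hgrad : HasFDerivAt h
      (InnerProductSpace.toDual ℝ (EuclideanSpace ℝ (Fin m)) (gradient h P₀))
      ((fun s : ℝ => P₀ + s • v) 0) := by
    rw [e0]
    exact (hh_diff P₀).hasGradientAt.hasFDerivAt
  have hg : HasDerivAt (fun s : ℝ => h (P₀ + s • v)) ⟪gradient h P₀, v⟫ 0 := by
    have := hgrad.comp_hasDerivAt 0 hcurve
    simpa [InnerProductSpace.toDual_apply_apply, Function.comp_def] using this
  have hge : ∀ s ∈ Set.Ioc (0:ℝ) 1, h P₀ ≤ h (P₀ + s • v) := by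
    intro s hs
    apply hmin
    have hmem : P₀ + s • v = (1 - s) • P₀ + s • P := by rw [hv]; module
    rw [hmem]
    exact superDiff_zero_convex hhom hP₀ hP (by linarith [hs.2]) hs.1.le (by ring)
  have hslope := hasDerivAt_iff_tendsto_slope.mp hg
  have h2 : Tendsto (slope (fun s : ℝ => h (P₀ + s • v)) 0) (𝓝[>] 0)
      (𝓝 ⟪gradient h P₀, v⟫) :=
    hslope.mono_left (nhdsWithin_mono _ (fun x hx => ne_of_gt hx))
  refine ge_of_tendsto h2 ?_
  filter_upwards [Ioc_mem_nhdsGT_of_mem ⟨le_refl (0:ℝ), zero_lt_one⟩] with s hs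
  rw [slope_def_field]
  apply div_nonneg
  · rw [sub_nonneg]
    simpa using hge s hs
  · simpa using hs.1.le

end Aux

/-- **Straight-line solutions for concave homogeneous potentials.** Let `φ` be concave and
positively homogeneous of degree `1`, `h` differentiable, and `P₀` a minimizer of `h` over the
super-differential `D_0(φ)` (relative to `e = 0`). With `X(t) = t • ∇h(P₀)`, for every `t ≥ 0`
one has `D_{X(t)}(φ) ⊆ D_0(φ)`, `P₀ ∈ D_{X(t)}(φ)`, `P₀` minimizes `h` over `D_{X(t)}(φ)`,
and the one-way derivative of `X` at `t` exists and equals `∇h(P₀)`. -/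
theorem straight_line_solution_concave_homogeneous {m : ℕ}
    (φ : EuclideanSpace ℝ (Fin m) → ℝ)
    (hconc : ConvexOn ℝ Set.univ (fun X => -φ X))
    (hhom : ∀ c : ℝ, 0 ≤ c → ∀ X, φ (c • X) = c * φ X)
    (h : EuclideanSpace ℝ (Fin m) → ℝ) (hh_diff : Differentiable ℝ h)
    (P₀ : EuclideanSpace ℝ (Fin m))
    (hP₀ : P₀ ∈ superDiff (fun _ => 0) φ 0)
    (hmin : ∀ P ∈ superDiff (fun _ => 0) φ 0, h P₀ ≤ h P) :
    ∀ t : ℝ, 0 ≤ t →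
      superDiff (fun _ => 0) φ (t • gradient h P₀) ⊆ superDiff (fun _ => 0) φ 0 ∧
      P₀ ∈ superDiff (fun _ => 0) φ (t • gradient h P₀) ∧
      (∀ P ∈ superDiff (fun _ => 0) φ (t • gradient h P₀), h P₀ ≤ h P) ∧
      Tendsto (fun lam : ℝ => lam⁻¹ • ((t + lam) • gradient h P₀ - t • gradient h P₀))
        (𝓝[>] 0) (𝓝 (gradient h P₀)) := by
  intro t ht
  set g := gradient h P₀ with hg
  have hsub : superDiff (fun _ => 0) φ (t • g) ⊆ superDiff (fun _ => 0) φ 0 :=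
    fun P hP => (superDiff_zero_iff hhom).mpr (superDiff_global hhom hP).1
  refine ⟨hsub, ?_, fun P hP => hmin P (hsub hP), ?_⟩
  · -- P₀ ∈ superDiff at t • g
    obtain ⟨Pq, hPq⟩ := exists_superDiff hconc g
    have hPqK : Pq ∈ superDiff (fun _ => 0) φ 0 :=
      (superDiff_zero_iff hhom).mpr (superDiff_global hhom hPq).1
    have hopt : 0 ≤ ⟪g, Pq - P₀⟫ := optimality hhom hh_diff hP₀ hmin hPqK
    have hφg : φ g = ⟪Pq, g⟫ := (superDiff_global hhom hPq).2
    have hP0g : ⟪P₀, g⟫ ≤ φ g := by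
      rw [inner_sub_right] at hopt
      have c1 : ⟪g, P₀⟫ = ⟪P₀, g⟫ := real_inner_comm _ _
      have c2 : ⟪g, Pq⟫ = ⟪Pq, g⟫ := real_inner_comm _ _
      rw [hφg]
      linarith
    intro Y
    have hY : φ Y ≤ ⟪P₀, Y⟫ := (superDiff_zero_iff hhom).mp hP₀ Y
    have hφX : φ (t • g) = t * φ g := hhom t ht g
    have hsm : ⟪P₀, t • g⟫ = t * ⟪P₀, g⟫ := real_inner_smul_right _ _ _
    have hmul : t * ⟪P₀, g⟫ ≤ t * φ g := mul_le_mul_of_nonneg_left hP0g ht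
    simp only [add_zero, inner_sub_right, hφX, hsm]
    linarith
  · -- the one-way derivative
    have hev : ∀ᶠ lam in 𝓝[>] (0:ℝ),
        lam⁻¹ • ((t + lam) • g - t • g) = g := by
      filter_upwards [self_mem_nhdsWithin] with lam hlam
      have hdiff : (t + lam) • g - t • g = lam • g := by module
      rw [hdiff, smul_smul, inv_mul_cancel₀ (ne_of_gt hlam), one_smul]
    exact Filter.Tendsto.congr' (EventuallyEq.symm hev) tendsto_const_nhds
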